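/- arXiv:2101.06839 — 2 statements merged into one kernel-verified Lean document; each statement's English description precedes it below -/
import Mathlib

section
/- Let X_1, ..., X_n (n \ge 4) be i.i.d. random vectors in R^p with covariance matrix \Sigma and finite fourth moments. Then the estimator \widehat{\|\Sigma\|_F^2} = (1/(4 binom(n,4))) \sum_{1 \le j_1 < j_2 < j_3 < j_4 \le n} tr((X_{j_1} - X_{j_2})(X_{j_1} - X_{j_2})^T (X_{j_3} - X_{j_4})(X_{j_3} - X_{j_4})^T) is unbiased: E[\widehat{\|\Sigma\|_F^2}] = \|\Sigma\|_F^2. -/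
open MeasureTheory ProbabilityTheory

lemma aux_trace {p : ℕ} (a b : Fin p → ℝ) :
    Matrix.trace (Matrix.vecMulVec a a * Matrix.vecMulVec b b)
      = ∑ l₁, ∑ l₂, (a l₁ * a l₂) * (b l₁ * b l₂) := by
  simp only [Matrix.trace, Matrix.diag, Matrix.mul_apply, Matrix.vecMulVec_apply]
  refine Finset.sum_congr rfl fun l₁ _ => Finset.sum_congr rfl fun l₂ _ => by ring

lemma aux_quarter : (4 : ENNReal)⁻¹ + 4⁻¹ = 2⁻¹ := by
  rw [← two_mul, show (4:ENNReal) = 2*2 by norm_num,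
    ENNReal.mul_inv (by norm_num) (by norm_num), ← mul_assoc,
    ENNReal.mul_inv_cancel two_ne_zero ENNReal.ofNat_ne_top, one_mul]

lemma aux_int_mul {Ω : Type*} [MeasurableSpace Ω] {μ : MeasureTheory.Measure Ω} [IsFiniteMeasure μ] {f g : Ω → ℝ} (hf : MemLp f 2 μ) (hg : MemLp g 2 μ) :
    Integrable (fun ω => f ω * g ω) μ := by
  have h : MemLp (f • g) 1 μ := hg.smul hf (hpqr := ⟨by
    simp only [inv_one]
    exact ENNReal.inv_two_add_inv_two⟩)
  exact h.integrable le_rfl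

lemma aux_memL2_mul {Ω : Type*} [MeasurableSpace Ω] {μ : MeasureTheory.Measure Ω} {f g : Ω → ℝ} (hf : MemLp f 4 μ) (hg : MemLp g 4 μ) :
    MemLp (fun ω => f ω * g ω) 2 μ := by
  have h : MemLp (f • g) 2 μ := hg.smul hf (hpqr := ⟨by
    exact aux_quarter⟩)
  exact h

lemma aux_sorted {n : ℕ} {x y z w : Fin n} (hxy : x < y) (hyz : y < z) (hzw : z < w) :
    List.Pairwise (· < ·) ([x, y, z, w]) := by
  refine List.Pairwise.cons ?_ (List.Pairwise.cons ?_ (List.Pairwise.cons ?_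
    (List.pairwise_singleton _ _)))
  · intro t ht
    simp only [List.mem_cons, List.mem_singleton, List.not_mem_nil, or_false] at ht
    rcases ht with rfl | rfl | rfl
    exacts [hxy, hxy.trans hyz, (hxy.trans hyz).trans hzw]
  · intro t ht
    simp only [List.mem_cons, List.mem_singleton, List.not_mem_nil, or_false] at ht
    rcases ht with rfl | rfl
    exacts [hyz, hyz.trans hzw]
  · intro t ht
    simp only [List.mem_singleton, List.mem_cons, List.not_mem_nil, or_false] at ht
    rcases ht with rfl
    exact hzw

lemma aux_card (n : ℕ) :
    (Finset.univ.filter (fun j : Fin n × Fin n × Fin n × Fin n =>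
      j.1 < j.2.1 ∧ j.2.1 < j.2.2.1 ∧ j.2.2.1 < j.2.2.2)).card = n.choose 4 := by
  classical
  have hpc : (Finset.powersetCard 4 (Finset.univ : Finset (Fin n))).card = n.choose 4 := by
    rw [Finset.card_powersetCard, Finset.card_univ, Fintype.card_fin]
  rw [← hpc]
  refine Finset.card_bij (fun j _ => ({j.1, j.2.1, j.2.2.1, j.2.2.2} : Finset (Fin n)))
    ?_ ?_ ?_
  · rintro ⟨a, b, c, d⟩ hj
    simp only [Finset.mem_filter, Finset.mem_univ, true_and] at hj
    obtain ⟨h1, h2, h3⟩ := hj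
    have hab : a ∉ ({b, c, d} : Finset (Fin n)) := by
      simp only [Finset.mem_insert, Finset.mem_singleton]
      push_neg
      exact ⟨h1.ne, (h1.trans h2).ne, ((h1.trans h2).trans h3).ne⟩
    have hbc : b ∉ ({c, d} : Finset (Fin n)) := by
      simp only [Finset.mem_insert, Finset.mem_singleton]
      push_neg
      exact ⟨h2.ne, (h2.trans h3).ne⟩
    have hcd : c ∉ ({d} : Finset (Fin n)) := by
      simp only [Finset.mem_singleton]
      exact h3.ne
    rw [Finset.mem_powersetCard_univ, Finset.card_insert_of_notMem hab,
      Finset.card_insert_of_notMem hbc, Finset.card_insert_of_notMem hcd,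
      Finset.card_singleton]
  · rintro ⟨a, b, c, d⟩ ha ⟨a', b', c', d'⟩ hb hset
    simp only [Finset.mem_filter, Finset.mem_univ, true_and] at ha hb
    obtain ⟨h1, h2, h3⟩ := ha
    obtain ⟨h1', h2', h3'⟩ := hb
    have hs1 := aux_sorted h1 h2 h3
    have hs2 := aux_sorted h1' h2' h3'
    have hnd1 : ([a, b, c, d] : List (Fin n)).Nodup := hs1.imp ne_of_lt
    have hnd2 : ([a', b', c', d'] : List (Fin n)).Nodup := hs2.imp ne_of_lt
    have htf : ([a, b, c, d] : List (Fin n)).toFinset = ([a', b', c', d'] : List (Fin n)).toFinset := by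
      simp only [List.toFinset_cons, List.toFinset_nil, LawfulSingleton.insert_empty_eq]
      exact hset
    have hperm := List.perm_of_nodup_nodup_toFinset_eq hnd1 hnd2 htf
    haveI : Std.Antisymm (α := Fin n) (· < ·) := ⟨fun x y hx hy => absurd hy (asymm hx)⟩
    have heq := hperm.eq_of_pairwise' hs1 hs2
    simp only [List.cons.injEq, and_true] at heq
    obtain ⟨rfl, rfl, rfl, rfl⟩ := heq
    rfl
  · intro s hs
    rw [Finset.mem_powersetCard_univ] at hs
    set f := s.orderEmbOfFin hs with hf
    have hmono := (s.orderEmbOfFin hs).strictMono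
    refine ⟨(f 0, f 1, f 2, f 3), ?_, ?_⟩
    · simp only [Finset.mem_filter, Finset.mem_univ, true_and]
      exact ⟨hmono (by decide), hmono (by decide), hmono (by decide)⟩
    · have hsub : ({f 0, f 1, f 2, f 3} : Finset (Fin n)) ⊆ s := by
        intro x hx
        simp only [Finset.mem_insert, Finset.mem_singleton] at hx
        rcases hx with rfl | rfl | rfl | rfl <;> exact Finset.orderEmbOfFin_mem s hs _
      have hcard : ({f 0, f 1, f 2, f 3} : Finset (Fin n)).card = 4 := by
        have h01 : (f 0 : Fin n) ∉ ({f 1, f 2, f 3} : Finset (Fin n)) := by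
          simp only [Finset.mem_insert, Finset.mem_singleton]
          push_neg
          exact ⟨(hmono (by decide)).ne, (hmono (by decide)).ne, (hmono (by decide)).ne⟩
        have h12 : (f 1 : Fin n) ∉ ({f 2, f 3} : Finset (Fin n)) := by
          simp only [Finset.mem_insert, Finset.mem_singleton]
          push_neg
          exact ⟨(hmono (by decide)).ne, (hmono (by decide)).ne⟩
        have h23 : (f 2 : Fin n) ∉ ({f 3} : Finset (Fin n)) := by
          simp only [Finset.mem_singleton]
          exact (hmono (by decide)).ne
        rw [Finset.card_insert_of_notMem h01, Finset.card_insert_of_notMem h12,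
          Finset.card_insert_of_notMem h23, Finset.card_singleton]
      exact (Finset.eq_of_subset_of_card_le hsub (by rw [hs, hcard])).symm ▸ rfl

/-- The U-statistic estimator of the squared Frobenius norm of the covariance
matrix is unbiased: for i.i.d. X_1, ..., X_n (n ≥ 4) with covariance Σ and finite fourth
moments,
E[(1/(4 C(n,4))) ∑_{j1<j2<j3<j4} tr((X_{j1}-X_{j2})(X_{j1}-X_{j2})ᵀ(X_{j3}-X_{j4})(X_{j3}-X_{j4})ᵀ)]
  = ‖Σ‖_F². -/
theorem stmt_2 {Ω : Type*} [MeasurableSpace Ω] (μ : Measure Ω) [IsProbabilityMeasure μ]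
    (p n : ℕ) (hn : 4 ≤ n) (X : Fin n → Ω → Fin p → ℝ) (m : Fin p → ℝ)
    (Sig : Matrix (Fin p) (Fin p) ℝ)
    (hXm : ∀ i, Measurable (X i))
    (hindep : iIndepFun X μ)
    (hident : ∀ i j, IdentDistrib (X i) (X j) μ μ)
    (hX4 : ∀ i l, MemLp (fun ω => X i ω l) 4 μ)
    (hmean : ∀ i l, ∫ ω, X i ω l ∂μ = m l)
    (hcov : ∀ i : Fin n, ∀ l₁ l₂ : Fin p,
      ∫ ω, (X i ω l₁ - m l₁) * (X i ω l₂ - m l₂) ∂μ = Sig l₁ l₂) :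
    ∫ ω, (1 / (4 * (n.choose 4 : ℝ))) *
        ∑ j ∈ Finset.univ.filter
          (fun j : Fin n × Fin n × Fin n × Fin n =>
            j.1 < j.2.1 ∧ j.2.1 < j.2.2.1 ∧ j.2.2.1 < j.2.2.2),
          Matrix.trace
            (Matrix.vecMulVec (X j.1 ω - X j.2.1 ω) (X j.1 ω - X j.2.1 ω) *
              Matrix.vecMulVec (X j.2.2.1 ω - X j.2.2.2 ω) (X j.2.2.1 ω - X j.2.2.2 ω)) ∂μ
      = ∑ l₁, ∑ l₂, Sig l₁ l₂ ^ 2 := by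
  -- basic integrability
  have hL2 : ∀ i l, MemLp (fun ω => X i ω l) 2 μ :=
    fun i l => (hX4 i l).mono_exponent (by norm_num)
  have hmul11 : ∀ (i j : Fin n) (l1 l2 : Fin p),
      Integrable (fun ω => X i ω l1 * X j ω l2) μ :=
    fun i j l1 l2 => aux_int_mul (hL2 i l1) (hL2 j l2)
  have hA2 : ∀ (i j : Fin n) (l1 l2 : Fin p),
      MemLp (fun ω => (X i ω l1 - X j ω l1) * (X i ω l2 - X j ω l2)) 2 μ :=
    fun i j l1 l2 => aux_memL2_mul ((hX4 i l1).sub (hX4 j l1)) ((hX4 i l2).sub (hX4 j l2))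
  have hABint : ∀ (i j k l : Fin n) (l1 l2 : Fin p),
      Integrable (fun ω => ((X i ω l1 - X j ω l1) * (X i ω l2 - X j ω l2)) *
        ((X k ω l1 - X l ω l1) * (X k ω l2 - X l ω l2))) μ :=
    fun i j k l l1 l2 => aux_int_mul (hA2 i j l1 l2) (hA2 k l l1 l2)
  -- fact 1 : cross moments
  have fact1 : ∀ (i j : Fin n), i ≠ j → ∀ (l1 l2 : Fin p),
      ∫ ω, X i ω l1 * X j ω l2 ∂μ = m l1 * m l2 := by
    intro i j hij l1 l2
    have hind : IndepFun (fun ω => X i ω l1) (fun ω => X j ω l2) μ :=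
      (hindep.indepFun hij).comp (measurable_pi_apply l1) (measurable_pi_apply l2)
    have h := hind.integral_fun_mul_eq_mul_integral
      (((measurable_pi_apply l1).comp (hXm i)).aestronglyMeasurable)
      (((measurable_pi_apply l2).comp (hXm j)).aestronglyMeasurable)
    calc ∫ ω, X i ω l1 * X j ω l2 ∂μ
        = (∫ ω, X i ω l1 ∂μ) * ∫ ω, X j ω l2 ∂μ := h
      _ = m l1 * m l2 := by rw [hmean, hmean]
  -- fact 2 : second moments
  have fact2 : ∀ (i : Fin n) (l1 l2 : Fin p),
      ∫ ω, X i ω l1 * X i ω l2 ∂μ = Sig l1 l2 + m l1 * m l2 := by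
    intro i l1 l2
    have h1 := hmul11 i i l1 l2
    have h2 : Integrable (fun ω => X i ω l1) μ := (hX4 i l1).integrable (by norm_num)
    have h3 : Integrable (fun ω => X i ω l2) μ := (hX4 i l2).integrable (by norm_num)
    have key : ∫ ω, (X i ω l1 - m l1) * (X i ω l2 - m l2) ∂μ
        = (∫ ω, X i ω l1 * X i ω l2 ∂μ) - m l1 * m l2 := by
      calc ∫ ω, (X i ω l1 - m l1) * (X i ω l2 - m l2) ∂μ
          = ∫ ω, (X i ω l1 * X i ω l2 - m l2 * X i ω l1 - m l1 * X i ω l2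
              + m l1 * m l2) ∂μ := by
            congr 1; funext ω; ring
        _ = (∫ ω, X i ω l1 * X i ω l2 ∂μ) - m l2 * (∫ ω, X i ω l1 ∂μ)
              - m l1 * (∫ ω, X i ω l2 ∂μ) + m l1 * m l2 := by
            have e2 : Integrable (fun ω => m l2 * X i ω l1) μ := h2.const_mul _
            have e3 : Integrable (fun ω => m l1 * X i ω l2) μ := h3.const_mul _
            have i12 : Integrable
                (fun ω => X i ω l1 * X i ω l2 - m l2 * X i ω l1) μ := h1.sub e2
            have i123 : Integrable
                (fun ω => X i ω l1 * X i ω l2 - m l2 * X i ω l1 - m l1 * X i ω l2) μ :=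
              i12.sub e3
            rw [integral_add i123 (integrable_const _), integral_sub i12 e3,
              integral_sub h1 e2, integral_const_mul, integral_const_mul, integral_const]
            simp [measure_univ]
        _ = (∫ ω, X i ω l1 * X i ω l2 ∂μ) - m l1 * m l2 := by
            rw [hmean, hmean]; ring
    have := hcov i l1 l2
    rw [key] at this
    linarith
  -- fact 3 : pair covariance
  have fact3 : ∀ (i j : Fin n), i ≠ j → ∀ (l1 l2 : Fin p),
      ∫ ω, (X i ω l1 - X j ω l1) * (X i ω l2 - X j ω l2) ∂μ = 2 * Sig l1 l2 := by
    intro i j hij l1 l2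
    calc ∫ ω, (X i ω l1 - X j ω l1) * (X i ω l2 - X j ω l2) ∂μ
        = ∫ ω, (X i ω l1 * X i ω l2 - X i ω l1 * X j ω l2 - X j ω l1 * X i ω l2
            + X j ω l1 * X j ω l2) ∂μ := by
          congr 1; funext ω; ring
      _ = (∫ ω, X i ω l1 * X i ω l2 ∂μ) - (∫ ω, X i ω l1 * X j ω l2 ∂μ)
            - (∫ ω, X j ω l1 * X i ω l2 ∂μ) + ∫ ω, X j ω l1 * X j ω l2 ∂μ := by
          have i12 : Integrable
              (fun ω => X i ω l1 * X i ω l2 - X i ω l1 * X j ω l2) μ :=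
            (hmul11 i i l1 l2).sub (hmul11 i j l1 l2)
          have i123 : Integrable
              (fun ω => X i ω l1 * X i ω l2 - X i ω l1 * X j ω l2 - X j ω l1 * X i ω l2) μ :=
            i12.sub (hmul11 j i l1 l2)
          rw [integral_add i123 (hmul11 j j l1 l2), integral_sub i12 (hmul11 j i l1 l2),
            integral_sub (hmul11 i i l1 l2) (hmul11 i j l1 l2)]
      _ = 2 * Sig l1 l2 := by
          rw [fact2 i l1 l2, fact2 j l1 l2, fact1 i j hij l1 l2, fact1 j i hij.symm l1 l2]
          ring
  -- fact 4 : factorization across disjoint pairs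
  have fact4 : ∀ (i j k l : Fin n), i ≠ k → i ≠ l → j ≠ k → j ≠ l → i ≠ j → k ≠ l →
      ∀ (l1 l2 : Fin p),
      ∫ ω, ((X i ω l1 - X j ω l1) * (X i ω l2 - X j ω l2)) *
        ((X k ω l1 - X l ω l1) * (X k ω l2 - X l ω l2)) ∂μ
      = (2 * Sig l1 l2) * (2 * Sig l1 l2) := by
    intro i j k l hik hil hjk hjl hij hkl l1 l2
    have hφ : Measurable (fun q : (Fin p → ℝ) × (Fin p → ℝ) =>
        (q.1 l1 - q.2 l1) * (q.1 l2 - q.2 l2)) := by fun_prop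
    have hind : IndepFun (fun ω => (X i ω l1 - X j ω l1) * (X i ω l2 - X j ω l2))
        (fun ω => (X k ω l1 - X l ω l1) * (X k ω l2 - X l ω l2)) μ :=
      (hindep.indepFun_prodMk_prodMk hXm i j k l hik hil hjk hjl).comp hφ hφ
    have h := hind.integral_fun_mul_eq_mul_integral (hA2 i j l1 l2).1 (hA2 k l l1 l2).1
    calc ∫ ω, ((X i ω l1 - X j ω l1) * (X i ω l2 - X j ω l2)) *
          ((X k ω l1 - X l ω l1) * (X k ω l2 - X l ω l2)) ∂μ
        = (∫ ω, (X i ω l1 - X j ω l1) * (X i ω l2 - X j ω l2) ∂μ) *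
          ∫ ω, (X k ω l1 - X l ω l1) * (X k ω l2 - X l ω l2) ∂μ := h
      _ = (2 * Sig l1 l2) * (2 * Sig l1 l2) := by
          rw [fact3 i j hij l1 l2, fact3 k l hkl l1 l2]
  -- trace rewrite
  have htr : ∀ (i j k l : Fin n),
      (fun ω => Matrix.trace (Matrix.vecMulVec (X i ω - X j ω) (X i ω - X j ω) *
        Matrix.vecMulVec (X k ω - X l ω) (X k ω - X l ω)))
      = fun ω => ∑ l1 : Fin p, ∑ l2 : Fin p,
          ((X i ω l1 - X j ω l1) * (X i ω l2 - X j ω l2)) *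
          ((X k ω l1 - X l ω l1) * (X k ω l2 - X l ω l2)) := by
    intro i j k l
    funext ω
    rw [aux_trace]
    simp only [Pi.sub_apply]
  have hTint : ∀ (i j k l : Fin n),
      Integrable (fun ω => Matrix.trace (Matrix.vecMulVec (X i ω - X j ω) (X i ω - X j ω) *
        Matrix.vecMulVec (X k ω - X l ω) (X k ω - X l ω))) μ := by
    intro i j k l
    rw [htr i j k l]
    exact integrable_finset_sum _ fun l1 _ =>
      integrable_finset_sum _ fun l2 _ => hABint i j k l l1 l2
  have fact5 : ∀ (i j k l : Fin n), i < j → j < k → k < l →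
      ∫ ω, Matrix.trace (Matrix.vecMulVec (X i ω - X j ω) (X i ω - X j ω) *
        Matrix.vecMulVec (X k ω - X l ω) (X k ω - X l ω)) ∂μ
      = ∑ l1 : Fin p, ∑ l2 : Fin p, (2 * Sig l1 l2) * (2 * Sig l1 l2) := by
    intro i j k l hij hjk hkl
    rw [htr i j k l]
    rw [integral_finset_sum _ (fun l1 _ =>
      integrable_finset_sum _ (fun l2 _ => hABint i j k l l1 l2))]
    refine Finset.sum_congr rfl fun l1 _ => ?_
    rw [integral_finset_sum _ (fun l2 _ => hABint i j k l l1 l2)]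
    refine Finset.sum_congr rfl fun l2 _ => ?_
    exact fact4 i j k l (hij.trans hjk).ne ((hij.trans hjk).trans hkl).ne hjk.ne
      (hjk.trans hkl).ne hij.ne hkl.ne l1 l2
  -- assembly
  rw [integral_const_mul]
  rw [integral_finset_sum _ (fun jj _ => hTint jj.1 jj.2.1 jj.2.2.1 jj.2.2.2)]
  have step : (∑ jj ∈ Finset.univ.filter
        (fun j : Fin n × Fin n × Fin n × Fin n =>
          j.1 < j.2.1 ∧ j.2.1 < j.2.2.1 ∧ j.2.2.1 < j.2.2.2),
        ∫ ω, Matrix.trace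
          (Matrix.vecMulVec (X jj.1 ω - X jj.2.1 ω) (X jj.1 ω - X jj.2.1 ω) *
            Matrix.vecMulVec (X jj.2.2.1 ω - X jj.2.2.2 ω) (X jj.2.2.1 ω - X jj.2.2.2 ω)) ∂μ)
      = ∑ _jj ∈ Finset.univ.filter
        (fun j : Fin n × Fin n × Fin n × Fin n =>
          j.1 < j.2.1 ∧ j.2.1 < j.2.2.1 ∧ j.2.2.1 < j.2.2.2),
        (∑ l1 : Fin p, ∑ l2 : Fin p, (2 * Sig l1 l2) * (2 * Sig l1 l2)) := by
    refine Finset.sum_congr rfl fun jj hjj => ?_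
    simp only [Finset.mem_filter, Finset.mem_univ, true_and] at hjj
    exact fact5 jj.1 jj.2.1 jj.2.2.1 jj.2.2.2 hjj.1 hjj.2.1 hjj.2.2
  rw [step, Finset.sum_const, aux_card, nsmul_eq_mul]
  have ht : (∑ l1 : Fin p, ∑ l2 : Fin p, (2 * Sig l1 l2) * (2 * Sig l1 l2))
      = 4 * ∑ l1 : Fin p, ∑ l2 : Fin p, Sig l1 l2 ^ 2 := by
    rw [Finset.mul_sum]
    refine Finset.sum_congr rfl fun l1 _ => ?_
    rw [Finset.mul_sum]
    exact Finset.sum_congr rfl fun l2 _ => by ring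
  rw [ht]
  have hC : (0:ℝ) < (n.choose 4 : ℝ) := by exact_mod_cast Nat.choose_pos hn
  have hC' : (n.choose 4 : ℝ) ≠ 0 := hC.ne'
  field_simp
end

section
/- Let q be a positive even integer and X_1,...,X_n (n \ge 2q) be i.i.d. random vectors in R^p with covariance matrix \Sigma and finite moments of order 2q. Then \widehat{\|\Sigma\|_q^q} = (1/(2^q binom(n,2q))) \sum_{l_1,l_2=1}^p \sum_{1 \le i_1 < \cdots < i_q < j_1 < \cdots < j_q \le n} \prod_{k=1}^q (X_{i_k,l_1} - X_{j_k,l_1})(X_{i_k,l_2} - X_{j_k,l_2}) satisfies E[\widehat{\|\Sigma\|_q^q}] = \|\Sigma\|_q^q = \sum_{l_1,l_2=1}^p \Sigma_{l_1,l_2}^q. -/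
open MeasureTheory ProbabilityTheory
open scoped ENNReal

private lemma integrable_mul_of_L2 {Ω : Type*} [MeasurableSpace Ω] {μ : Measure Ω}
    {f g : Ω → ℝ} (hf : MemLp f 2 μ) (hg : MemLp g 2 μ) :
    Integrable (fun ω => f ω * g ω) μ := by
  have h : (1 : ℝ≥0∞) / 1 = 1 / 2 + 1 / 2 := by
    rw [ENNReal.add_halves]; simp
  have h2 : MemLp (g • f) 1 μ := hf.smul hg
  have := memLp_one_iff_integrable.mp h2
  exact this.congr (by filter_upwards with ω; simp [mul_comm])

private lemma indep_prod_int {Ω : Type*} [MeasurableSpace Ω] (μ : Measure Ω)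
    [IsProbabilityMeasure μ] {n p q : ℕ} (X : Fin n → Ω → Fin p → ℝ)
    (hXm : ∀ i, Measurable (X i))
    (hindep : iIndepFun X μ)
    (i j : Fin q → Fin n) (hi : Function.Injective i) (hj : Function.Injective j)
    (hij : ∀ a b, i a ≠ j b)
    (φ : (Fin p → ℝ) → (Fin p → ℝ) → ℝ)
    (hφ : Measurable (fun r : (Fin p → ℝ) × (Fin p → ℝ) => φ r.1 r.2))
    (hint : ∀ k, Integrable (fun ω => φ (X (i k) ω) (X (j k) ω)) μ)
    (s : Finset (Fin q)) :
    Integrable (fun ω => ∏ k ∈ s, φ (X (i k) ω) (X (j k) ω)) μ ∧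
    ∫ ω, ∏ k ∈ s, φ (X (i k) ω) (X (j k) ω) ∂μ
      = ∏ k ∈ s, ∫ ω, φ (X (i k) ω) (X (j k) ω) ∂μ := by
  classical
  induction s using Finset.induction_on with
  | empty => simp
  | @insert a s' ha ih =>
    -- independence of the `a`-factor from the product over `s'`
    set S : Finset (Fin n) := {i a, j a} with hS
    set T : Finset (Fin n) := s'.image i ∪ s'.image j with hT
    have hST : Disjoint S T := by
      rw [Finset.disjoint_left]
      intro x hxS hxT
      simp only [hS, Finset.mem_insert, Finset.mem_singleton] at hxS
      simp only [hT, Finset.mem_union, Finset.mem_image] at hxT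
      rcases hxS with rfl | rfl
      · rcases hxT with ⟨k, hk, hkx⟩ | ⟨k, hk, hkx⟩
        · exact ha ((hi hkx) ▸ hk)
        · exact hij a k hkx.symm
      · rcases hxT with ⟨k, hk, hkx⟩ | ⟨k, hk, hkx⟩
        · exact hij k a hkx
        · exact ha ((hj hkx) ▸ hk)
    have hmemia : i a ∈ S := Finset.mem_insert_self _ _
    have hmemja : j a ∈ S := Finset.mem_insert_of_mem (Finset.mem_singleton_self _)
    have hmemiT : ∀ k : {x // x ∈ s'}, i k.1 ∈ T := fun k =>
      Finset.mem_union_left _ (Finset.mem_image_of_mem _ k.2)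
    have hmemjT : ∀ k : {x // x ∈ s'}, j k.1 ∈ T := fun k =>
      Finset.mem_union_right _ (Finset.mem_image_of_mem _ k.2)
    have hg1 : Measurable (fun v : (∀ x : (S : Finset (Fin n)), Fin p → ℝ) =>
        (v ⟨i a, hmemia⟩, v ⟨j a, hmemja⟩)) :=
      (measurable_pi_apply _).prodMk (measurable_pi_apply _)
    have hFLm : Measurable (fun v : (∀ x : (S : Finset (Fin n)), Fin p → ℝ) =>
        φ (v ⟨i a, hmemia⟩) (v ⟨j a, hmemja⟩)) := hφ.comp hg1
    have hFRm : Measurable (fun v : (∀ x : (T : Finset (Fin n)), Fin p → ℝ) =>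
        ∏ k ∈ s'.attach, φ (v ⟨i k.1, hmemiT k⟩) (v ⟨j k.1, hmemjT k⟩)) :=
      Finset.measurable_prod _ fun k _ =>
        hφ.comp ((measurable_pi_apply _).prodMk (measurable_pi_apply _) :
          Measurable (fun v : (∀ x : (T : Finset (Fin n)), Fin p → ℝ) =>
            (v ⟨i k.1, hmemiT k⟩, v ⟨j k.1, hmemjT k⟩)))
    have hcomp := (hindep.indepFun_finset S T hST hXm).comp hFLm hFRm
    have hEqR : ((fun v : (∀ x : (T : Finset (Fin n)), Fin p → ℝ) =>
          ∏ k ∈ s'.attach, φ (v ⟨i k.1, hmemiT k⟩) (v ⟨j k.1, hmemjT k⟩))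
            ∘ fun ω (x : T) => X x ω)
        = fun ω => ∏ k ∈ s', φ (X (i k) ω) (X (j k) ω) := by
      funext ω
      exact Finset.prod_attach s' (fun k => φ (X (i k) ω) (X (j k) ω))
    have hIndep : IndepFun (fun ω => φ (X (i a) ω) (X (j a) ω))
        (fun ω => ∏ k ∈ s', φ (X (i k) ω) (X (j k) ω)) μ := by
      rw [← hEqR]; exact hcomp
    have hintprod : Integrable (fun ω => ∏ k ∈ insert a s', φ (X (i k) ω) (X (j k) ω)) μ := by
      have := hIndep.integrable_mul (hint a) ih.1
      refine this.congr (by filter_upwards with ω; rw [Finset.prod_insert ha]; rfl)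
    refine ⟨hintprod, ?_⟩
    have hrw : (fun ω => ∏ k ∈ insert a s', φ (X (i k) ω) (X (j k) ω))
        = (fun ω => φ (X (i a) ω) (X (j a) ω)) *
          (fun ω => ∏ k ∈ s', φ (X (i k) ω) (X (j k) ω)) := by
      funext ω; rw [Finset.prod_insert ha]; rfl
    rw [hrw, hIndep.integral_mul_eq_mul_integral (hint a).1 ih.1.1, ih.2, Finset.prod_insert ha]

private def comb {n q : ℕ} (ij : (Fin q → Fin n) × (Fin q → Fin n)) (k : Fin (2 * q)) : Fin n :=
  if h : (k : ℕ) < q then ij.1 ⟨k, h⟩ else ij.2 ⟨(k : ℕ) - q, by have := k.isLt; omega⟩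

private lemma comb_strictMono {n q : ℕ} {ij : (Fin q → Fin n) × (Fin q → Fin n)}
    (h1 : ∀ a b : Fin q, a < b → ij.1 a < ij.1 b)
    (h2 : ∀ a b : Fin q, a < b → ij.2 a < ij.2 b)
    (h3 : ∀ a b : Fin q, ij.1 a < ij.2 b) :
    StrictMono (comb ij) := by
  intro k k' hkk'
  have hkk'' : (k : ℕ) < (k' : ℕ) := hkk'
  unfold comb
  by_cases hk : (k : ℕ) < q
  · by_cases hk' : (k' : ℕ) < q
    · rw [dif_pos hk, dif_pos hk']
      exact h1 _ _ (by simpa using hkk'')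
    · rw [dif_pos hk, dif_neg hk']
      exact h3 _ _
  · have hk' : ¬ (k' : ℕ) < q := by omega
    rw [dif_neg hk, dif_neg hk']
    exact h2 _ _ (by simp only [Fin.mk_lt_mk]; omega)

private lemma card_filter_strictPairs (n q : ℕ) :
    (Finset.univ.filter
      (fun ij : (Fin q → Fin n) × (Fin q → Fin n) =>
        (∀ a b : Fin q, a < b → ij.1 a < ij.1 b) ∧
        (∀ a b : Fin q, a < b → ij.2 a < ij.2 b) ∧
        (∀ a b : Fin q, ij.1 a < ij.2 b))).card = n.choose (2 * q) := by
  have hc : (Finset.powersetCard (2 * q) (Finset.univ : Finset (Fin n))).card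
      = n.choose (2 * q) := by
    rw [Finset.card_powersetCard, Finset.card_univ, Fintype.card_fin]
  rw [← hc]
  refine Finset.card_bij' (fun ij _ => Finset.image (comb ij) Finset.univ)
    (fun s hs => (fun k => s.orderEmbOfFin (Finset.mem_powersetCard.mp hs).2
        ⟨k, by have := k.isLt; omega⟩,
      fun k => s.orderEmbOfFin (Finset.mem_powersetCard.mp hs).2
        ⟨q + k, by have := k.isLt; omega⟩)) ?_ ?_ ?_ ?_
  · -- maps into powersetCard
    intro ij hij
    rw [Finset.mem_filter] at hij
    obtain ⟨-, h1, h2, h3⟩ := hij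
    rw [Finset.mem_powersetCard]
    refine ⟨Finset.subset_univ _, ?_⟩
    rw [Finset.card_image_of_injective _ (comb_strictMono h1 h2 h3).injective,
      Finset.card_univ, Fintype.card_fin]
  · -- maps into filter
    intro s hs
    rw [Finset.mem_filter]
    refine ⟨Finset.mem_univ _, ?_, ?_, ?_⟩
    · intro a b hab
      exact (s.orderEmbOfFin _).strictMono (by simp only [Fin.mk_lt_mk]; exact hab)
    · intro a b hab
      exact (s.orderEmbOfFin _).strictMono (by simp only [Fin.mk_lt_mk]; omega)
    · intro a b
      exact (s.orderEmbOfFin _).strictMono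
        (by simp only [Fin.mk_lt_mk]; have := a.isLt; omega)
  · -- left inverse
    intro ij hij
    rw [Finset.mem_filter] at hij
    obtain ⟨-, h1, h2, h3⟩ := hij
    have hinj := (comb_strictMono h1 h2 h3).injective
    have hcard : (Finset.image (comb ij) Finset.univ).card = 2 * q := by
      rw [Finset.card_image_of_injective _ hinj, Finset.card_univ, Fintype.card_fin]
    have huniq : comb ij = ⇑((Finset.image (comb ij) Finset.univ).orderEmbOfFin hcard) :=
      Finset.orderEmbOfFin_unique _ (fun x => Finset.mem_image_of_mem _ (Finset.mem_univ x))
        (comb_strictMono h1 h2 h3)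
    have e1 : ∀ (k : Fin q) (hk : (k : ℕ) < 2 * q),
        (Finset.image (comb ij) Finset.univ).orderEmbOfFin hcard ⟨k, hk⟩ = ij.1 k := by
      intro k hk
      rw [← congrFun huniq ⟨(k : ℕ), hk⟩]
      show comb ij ⟨(k : ℕ), hk⟩ = ij.1 k
      unfold comb
      rw [dif_pos (show ((⟨(k : ℕ), hk⟩ : Fin (2 * q)) : ℕ) < q from k.isLt)]
    have e2 : ∀ (k : Fin q) (hk : q + (k : ℕ) < 2 * q),
        (Finset.image (comb ij) Finset.univ).orderEmbOfFin hcard ⟨q + k, hk⟩ = ij.2 k := by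
      intro k hk
      rw [← congrFun huniq ⟨q + (k : ℕ), hk⟩]
      show comb ij ⟨q + (k : ℕ), hk⟩ = ij.2 k
      unfold comb
      rw [dif_neg (show ¬ ((⟨q + (k : ℕ), hk⟩ : Fin (2 * q)) : ℕ) < q by simp)]
      exact congrArg ij.2 (Fin.ext (by simp))
    exact Prod.ext (funext fun k => e1 k (by have := k.isLt; omega))
      (funext fun k => e2 k (by have := k.isLt; omega))
  · -- right inverse
    intro s hs
    have hcard : s.card = 2 * q := (Finset.mem_powersetCard.mp hs).2
    have hcomb : comb ((fun k => s.orderEmbOfFin (Finset.mem_powersetCard.mp hs).2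
          (⟨(k : ℕ), by have := k.isLt; omega⟩ : Fin (2 * q)),
        fun k => s.orderEmbOfFin (Finset.mem_powersetCard.mp hs).2
          (⟨q + (k : ℕ), by have := k.isLt; omega⟩ : Fin (2 * q))))
        = ⇑(s.orderEmbOfFin hcard) := by
      funext k
      unfold comb
      by_cases hk : (k : ℕ) < q
      · rw [dif_pos hk]
      · rw [dif_neg hk]
        refine Finset.orderEmbOfFin_eq_orderEmbOfFin_iff.mpr ?_
        have := k.isLt
        simp only []
        omega
    apply Finset.coe_injective
    rw [Finset.coe_image, Finset.coe_univ, Set.image_univ, hcomb,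
      Finset.range_orderEmbOfFin]


/-- Unbiasedness of the U-statistic estimator of ‖Σ‖_q^q for even q:
E[(1/(2^q C(n,2q))) ∑_{l₁,l₂} ∑_{i₁<⋯<i_q<j₁<⋯<j_q}
   ∏_k (X_{i_k,l₁}-X_{j_k,l₁})(X_{i_k,l₂}-X_{j_k,l₂})] = ∑_{l₁,l₂} Σ_{l₁,l₂}^q.
The ordered tuples i₁<⋯<i_q<j₁<⋯<j_q are encoded as pairs of strictly monotone maps
i, j : Fin q → Fin n with every i a < every j b. -/
theorem stmt_3 {Ω : Type*} [MeasurableSpace Ω] (μ : Measure Ω) [IsProbabilityMeasure μ]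
    (p n q : ℕ) (hq : 0 < q) (hqeven : Even q) (hn : 2 * q ≤ n)
    (X : Fin n → Ω → Fin p → ℝ) (m : Fin p → ℝ) (Sig : Matrix (Fin p) (Fin p) ℝ)
    (hXm : ∀ i, Measurable (X i))
    (hindep : iIndepFun X μ)
    (hident : ∀ i j, IdentDistrib (X i) (X j) μ μ)
    (hX2q : ∀ i l, MemLp (fun ω => X i ω l) (2 * q : ℕ) μ)
    (hmean : ∀ i l, ∫ ω, X i ω l ∂μ = m l)
    (hcov : ∀ i : Fin n, ∀ l₁ l₂ : Fin p,
      ∫ ω, (X i ω l₁ - m l₁) * (X i ω l₂ - m l₂) ∂μ = Sig l₁ l₂) :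
    ∫ ω, (1 / (2 ^ q * (n.choose (2 * q) : ℝ))) *
        ∑ l₁ : Fin p, ∑ l₂ : Fin p,
          ∑ ij ∈ Finset.univ.filter
            (fun ij : (Fin q → Fin n) × (Fin q → Fin n) =>
              (∀ a b : Fin q, a < b → ij.1 a < ij.1 b) ∧
              (∀ a b : Fin q, a < b → ij.2 a < ij.2 b) ∧
              (∀ a b : Fin q, ij.1 a < ij.2 b)),
            ∏ k : Fin q,
              (X (ij.1 k) ω l₁ - X (ij.2 k) ω l₁) * (X (ij.1 k) ω l₂ - X (ij.2 k) ω l₂) ∂μ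
      = ∑ l₁ : Fin p, ∑ l₂ : Fin p, Sig l₁ l₂ ^ q := by
  classical
  have hX2 : ∀ i l, MemLp (fun ω => X i ω l) 2 μ := fun i l =>
    (hX2q i l).mono_exponent (by exact_mod_cast (show (2 : ℕ) ≤ 2 * q by omega))
  have hXl_meas : ∀ (w : Fin n) (l : Fin p), Measurable fun ω => X w ω l :=
    fun w l => (measurable_pi_apply l).comp (hXm w)
  have hXl_int : ∀ w l, Integrable (fun ω => X w ω l) μ := fun w l =>
    (hX2 w l).integrable one_le_two
  have hL2c : ∀ w l, MemLp (fun ω => X w ω l - m l) 2 μ := fun w l =>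
    (hX2 w l).sub (memLp_const _)
  have hmean0 : ∀ w l, ∫ ω, (X w ω l - m l) ∂μ = 0 := by
    intro w l
    rw [integral_sub (hXl_int w l) (integrable_const _), hmean, integral_const]
    simp
  have hmeasc : ∀ (w : Fin n) (l : Fin p), Measurable fun ω => X w ω l - m l :=
    fun w l => (hXl_meas w l).sub measurable_const
  have key : ∀ u v : Fin n, u ≠ v → ∀ l1 l2 : Fin p,
      ∫ ω, (X u ω l1 - X v ω l1) * (X u ω l2 - X v ω l2) ∂μ = 2 * Sig l1 l2 := by
    intro u v huv l1 l2
    have hind : ∀ (w w' : Fin n), w ≠ w' → ∀ (l l' : Fin p),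
        IndepFun (fun ω => X w ω l - m l) (fun ω => X w' ω l' - m l') μ := by
      intro w w' hww' l l'
      exact (hindep.indepFun hww').comp
        ((measurable_pi_apply l).sub measurable_const)
        ((measurable_pi_apply l').sub measurable_const)
    have hintm : ∀ (w w' : Fin n) (l l' : Fin p),
        Integrable (fun ω => (X w ω l - m l) * (X w' ω l' - m l')) μ :=
      fun w w' l l' => integrable_mul_of_L2 (hL2c w l) (hL2c w' l')
    have hrw : (fun ω => (X u ω l1 - X v ω l1) * (X u ω l2 - X v ω l2))
        = fun ω => ((X u ω l1 - m l1) * (X u ω l2 - m l2)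
            + (X v ω l1 - m l1) * (X v ω l2 - m l2))
          - ((X u ω l1 - m l1) * (X v ω l2 - m l2)
            + (X v ω l1 - m l1) * (X u ω l2 - m l2)) := by
      funext ω; ring
    have hAdd1 : Integrable (fun ω => (X u ω l1 - m l1) * (X u ω l2 - m l2)
        + (X v ω l1 - m l1) * (X v ω l2 - m l2)) μ := (hintm u u l1 l2).add (hintm v v l1 l2)
    have hAdd2 : Integrable (fun ω => (X u ω l1 - m l1) * (X v ω l2 - m l2)
        + (X v ω l1 - m l1) * (X u ω l2 - m l2)) μ := (hintm u v l1 l2).add (hintm v u l1 l2)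
    rw [hrw, integral_sub hAdd1 hAdd2,
      integral_add (hintm u u l1 l2) (hintm v v l1 l2),
      integral_add (hintm u v l1 l2) (hintm v u l1 l2),
      hcov u l1 l2, hcov v l1 l2,
      (hind u v huv l1 l2).integral_fun_mul_eq_mul_integral (hmeasc u l1).aestronglyMeasurable
        (hmeasc v l2).aestronglyMeasurable,
      (hind v u (Ne.symm huv) l1 l2).integral_fun_mul_eq_mul_integral (hmeasc v l1).aestronglyMeasurable
        (hmeasc u l2).aestronglyMeasurable,
      hmean0 u l1, hmean0 v l2, hmean0 v l1, hmean0 u l2]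
    ring
  have hterm : ∀ (l1 l2 : Fin p) (ij : (Fin q → Fin n) × (Fin q → Fin n)),
      ij ∈ Finset.univ.filter
        (fun ij : (Fin q → Fin n) × (Fin q → Fin n) =>
          (∀ a b : Fin q, a < b → ij.1 a < ij.1 b) ∧
          (∀ a b : Fin q, a < b → ij.2 a < ij.2 b) ∧
          (∀ a b : Fin q, ij.1 a < ij.2 b)) →
      Integrable (fun ω => ∏ k : Fin q,
        (X (ij.1 k) ω l1 - X (ij.2 k) ω l1) * (X (ij.1 k) ω l2 - X (ij.2 k) ω l2)) μ ∧
      ∫ ω, ∏ k : Fin q,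
          (X (ij.1 k) ω l1 - X (ij.2 k) ω l1) * (X (ij.1 k) ω l2 - X (ij.2 k) ω l2) ∂μ
        = 2 ^ q * Sig l1 l2 ^ q := by
    intro l1 l2 ij hij
    rw [Finset.mem_filter] at hij
    obtain ⟨-, h1, h2, h3⟩ := hij
    have hi : Function.Injective ij.1 :=
      (show StrictMono ij.1 from fun a b h => h1 a b h).injective
    have hj : Function.Injective ij.2 :=
      (show StrictMono ij.2 from fun a b h => h2 a b h).injective
    have hijne : ∀ a b, ij.1 a ≠ ij.2 b := fun a b => (h3 a b).ne
    have hφ : Measurable (fun r : (Fin p → ℝ) × (Fin p → ℝ) =>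
        (r.1 l1 - r.2 l1) * (r.1 l2 - r.2 l2)) := by fun_prop
    have hint : ∀ k, Integrable (fun ω =>
        (X (ij.1 k) ω l1 - X (ij.2 k) ω l1) * (X (ij.1 k) ω l2 - X (ij.2 k) ω l2)) μ :=
      fun k => integrable_mul_of_L2 ((hX2 _ l1).sub (hX2 _ l1)) ((hX2 _ l2).sub (hX2 _ l2))
    have H := indep_prod_int μ X hXm hindep ij.1 ij.2 hi hj hijne
      (fun v w => (v l1 - w l1) * (v l2 - w l2)) hφ hint Finset.univ
    refine ⟨H.1, ?_⟩
    rw [H.2, Finset.prod_congr rfl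
        (fun k _ => key (ij.1 k) (ij.2 k) (hijne k k) l1 l2),
      Finset.prod_const, Finset.card_univ, Fintype.card_fin, mul_pow]
  have main2 : (∫ ω, ∑ l₁ : Fin p, ∑ l₂ : Fin p,
        ∑ ij ∈ Finset.univ.filter
          (fun ij : (Fin q → Fin n) × (Fin q → Fin n) =>
            (∀ a b : Fin q, a < b → ij.1 a < ij.1 b) ∧
            (∀ a b : Fin q, a < b → ij.2 a < ij.2 b) ∧
            (∀ a b : Fin q, ij.1 a < ij.2 b)),
          ∏ k : Fin q,
            (X (ij.1 k) ω l₁ - X (ij.2 k) ω l₁) * (X (ij.1 k) ω l₂ - X (ij.2 k) ω l₂) ∂μ)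
      = ∑ l₁ : Fin p, ∑ l₂ : Fin p,
          (n.choose (2 * q) : ℝ) * (2 ^ q * Sig l₁ l₂ ^ q) := by
    rw [integral_finset_sum _ (fun l1 _ => integrable_finset_sum _ fun l2 _ =>
      integrable_finset_sum _ fun ij hij => (hterm l1 l2 ij hij).1)]
    refine Finset.sum_congr rfl fun l1 _ => ?_
    rw [integral_finset_sum _ (fun l2 _ =>
      integrable_finset_sum _ fun ij hij => (hterm l1 l2 ij hij).1)]
    refine Finset.sum_congr rfl fun l2 _ => ?_
    rw [integral_finset_sum _ (fun ij hij => (hterm l1 l2 ij hij).1),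
      Finset.sum_congr rfl (fun ij hij => (hterm l1 l2 ij hij).2),
      Finset.sum_const, card_filter_strictPairs, nsmul_eq_mul]
  rw [integral_const_mul, main2, Finset.mul_sum]
  refine Finset.sum_congr rfl fun l1 _ => ?_
  rw [Finset.mul_sum]
  refine Finset.sum_congr rfl fun l2 _ => ?_
  have hC : ((n.choose (2 * q) : ℕ) : ℝ) ≠ 0 :=
    Nat.cast_ne_zero.mpr (Nat.choose_pos hn).ne'
  have h2 : (2 : ℝ) ^ q ≠ 0 := by positivity
  field_simp
end
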